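/- Let ρ ∈ (0,1) and A₂(ρ) = [[-ρ², ρ√(2(1-ρ²)), 1-ρ²],[ρ√(2(1-ρ²)), 2ρ²-1, ρ√(2(1-ρ²))],[1-ρ², ρ√(2(1-ρ²)), -ρ²]]. For any φ₁, φ₃ ∈ ℂ, the constant function Ψ(x) = (φ₁, -(√(1-ρ²)/(√2·ρ))(φ₁+φ₃), φ₃) satisfies U_{A₂(ρ)}Ψ = -Ψ, and the resulting stationary measure is μ(x) = ((1+ρ²)/(2ρ²))(|φ₁|² + |φ₃|²) + ((1-ρ²)/ρ²)·Re(φ₁·conj(φ₃)), which is uniform on ℤ. -/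

import Mathlib

open Complex Matrix Finset

noncomputable def walk (A : Matrix (Fin 3) (Fin 3) ℂ) (Ψ : ℤ → Fin 3 → ℂ) : ℤ → Fin 3 → ℂ :=
  fun x => ![∑ j, A 0 j * Ψ (x + 1) j, ∑ j, A 1 j * Ψ x j, ∑ j, A 2 j * Ψ (x - 1) j]

noncomputable def A₂ (ρ : ℝ) : Matrix (Fin 3) (Fin 3) ℂ :=
  !![(-ρ ^ 2 : ℝ), (ρ * Real.sqrt (2 * (1 - ρ ^ 2)) : ℝ), ((1 - ρ ^ 2 : ℝ) : ℂ);
    (ρ * Real.sqrt (2 * (1 - ρ ^ 2)) : ℝ), ((2 * ρ ^ 2 - 1 : ℝ) : ℂ), (ρ * Real.sqrt (2 * (1 - ρ ^ 2)) : ℝ);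
    ((1 - ρ ^ 2 : ℝ) : ℂ), (ρ * Real.sqrt (2 * (1 - ρ ^ 2)) : ℝ), (-ρ ^ 2 : ℝ)]

theorem A₂_type1_stationary (ρ : ℝ) (hρ : ρ ∈ Set.Ioo (0 : ℝ) 1) (φ₁ φ₃ : ℂ)
    (Ψ : ℤ → Fin 3 → ℂ)
    (hΨ : Ψ = fun _ => ![φ₁,
      -((Real.sqrt (1 - ρ ^ 2) / (Real.sqrt 2 * ρ) : ℝ) : ℂ) * (φ₁ + φ₃), φ₃])
    (μ : ℤ → ℝ) (hμ : μ = fun x => ∑ i, ‖Ψ x i‖ ^ 2) :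
    (walk (A₂ ρ) Ψ = fun x i => (-1 : ℂ) * Ψ x i) ∧
    (∀ x : ℤ, μ x = (1 + ρ ^ 2) / (2 * ρ ^ 2) * (‖φ₁‖ ^ 2 + ‖φ₃‖ ^ 2)
      + (1 - ρ ^ 2) / ρ ^ 2 * (φ₁ * (starRingEnd ℂ) φ₃).re) ∧
    (∀ x y : ℤ, μ x = μ y) := by
  obtain ⟨hρ0, hρ1⟩ := hρ
  have h1 : (0:ℝ) < 1 - ρ ^ 2 := by nlinarith
  set s1 := Real.sqrt (1 - ρ ^ 2) with hs1
  set s2 := Real.sqrt 2 with hs2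
  have hs1sq : s1 ^ 2 = 1 - ρ ^ 2 := Real.sq_sqrt h1.le
  have hs2sq : s2 ^ 2 = 2 := Real.sq_sqrt (by norm_num)
  have hsplit : Real.sqrt (2 * (1 - ρ ^ 2)) = s2 * s1 := Real.sqrt_mul (by norm_num) _
  have hs2ne : s2 ≠ 0 := by positivity
  have hρne : ρ ≠ 0 := hρ0.ne'
  constructor
  · have c1 : (s1:ℂ)^2 = 1 - (ρ:ℂ)^2 := by rw [← Complex.ofReal_pow, hs1sq]; push_cast; ring
    have c2 : (s2:ℂ)^2 = 2 := by rw [← Complex.ofReal_pow, hs2sq]; push_cast; ring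
    have cρ : (ρ:ℂ) ≠ 0 := Complex.ofReal_ne_zero.mpr hρne
    have cs2 : (s2:ℂ) ≠ 0 := Complex.ofReal_ne_zero.mpr hs2ne
    funext x i
    fin_cases i
    · simp [walk, A₂, hΨ, hsplit, Fin.sum_univ_three]
      field_simp
      linear_combination (-(φ₁+φ₃)) * c1
    · simp [walk, A₂, hΨ, hsplit, Fin.sum_univ_three]
      field_simp
      linear_combination ((ρ:ℂ)^2*s1*(φ₁+φ₃)) * c2
    · simp [walk, A₂, hΨ, hsplit, Fin.sum_univ_three]
      field_simp
      linear_combination (-(φ₁+φ₃)) * c1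
  constructor
  · intro x
    subst hμ hΨ
    simp only [Fin.sum_univ_three, Matrix.cons_val_zero, Matrix.cons_val_one,
      Matrix.head_cons, Matrix.cons_val_two, Matrix.tail_cons]
    have hnorm : ‖-((s1 / (s2 * ρ) : ℝ) : ℂ) * (φ₁ + φ₃)‖ ^ 2
        = (s1 / (s2 * ρ)) ^ 2 * ‖φ₁ + φ₃‖ ^ 2 := by
      rw [norm_mul, norm_neg, Complex.norm_real, mul_pow, Real.norm_eq_abs, _root_.sq_abs]
    have hadd : ‖φ₁ + φ₃‖ ^ 2 = ‖φ₁‖ ^ 2 + ‖φ₃‖ ^ 2 + 2 * (φ₁ * (starRingEnd ℂ) φ₃).re := by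
      have h := Complex.normSq_add φ₁ φ₃
      simpa [Complex.normSq_eq_norm_sq] using h
    have hc : (s1 / (s2 * ρ)) ^ 2 = (1 - ρ ^ 2) / (2 * ρ ^ 2) := by
      rw [div_pow, mul_pow, hs1sq, hs2sq]
    rw [hnorm, hadd, hc]
    field_simp
    ring
  · intro x y
    subst hΨ hμ; rfl
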